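/- Let L ∈ 𝐋 and let γ : [0,1] → 𝐋 satisfy γ(0) = L and d_ABW(γ(u), γ(v)) = |u−v|·d_ABW(γ(0), γ(1)) for all u, v ∈ [0,1] (i.e., γ induces a constant speed geodesic in the quotient space 𝐋/𝐎). Then there exists V ∈ 𝐕(L) such that d_ABW(γ(u), L+uV) = 0 for every u ∈ [0,1]; that is, every constant speed geodesic emanating from [L] is a displacement interpolation [L+uV] for some V ∈ 𝐕(L). -/

import Mathlib

open Matrix Filter Topology
set_option linter.unusedSectionVars false
set_option maxHeartbeats 1000000

/-- Square matrices of size `dT × dT`, indexed by blocks: index `(t, i)` is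
row/column `i` within block `t`. -/
abbrev Mat (d T : ℕ) := Matrix (Fin T × Fin d) (Fin T × Fin d) ℝ

/-- The `t`-th diagonal `d × d` block of a `dT × dT` matrix. -/
def blk {d T : ℕ} (A : Mat d T) (t : Fin T) : Matrix (Fin d) (Fin d) ℝ :=
  fun i j => A (t, i) (t, j)

/-- The `t`-th block column of a `dT × dT` matrix, a `dT × d` matrix. -/
def colBlk {d T : ℕ} (A : Mat d T) (t : Fin T) : Matrix (Fin T × Fin d) (Fin d) ℝ :=
  fun p j => A p (t, j)

/-- Membership in `𝐋`: block lower triangular matrices. -/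
def memL {d T : ℕ} (A : Mat d T) : Prop :=
  ∀ (t s : Fin T) (i j : Fin d), t < s → A (t, i) (s, j) = 0

/-- Membership in `𝐎`: block diagonal matrices with orthogonal `d × d` diagonal blocks
(equivalently: block diagonal and orthogonal). -/
def memO {d T : ℕ} (O : Mat d T) : Prop :=
  (∀ (t s : Fin T) (i j : Fin d), t ≠ s → O (t, i) (s, j) = 0) ∧ Oᵀ * O = 1

/-- The Frobenius norm of a real matrix. -/
noncomputable def frobNorm {m n : Type*} [Fintype m] [Fintype n] (A : Matrix m n ℝ) : ℝ :=
  Real.sqrt (∑ i, ∑ j, (A i j) ^ 2)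

/-- The Frobenius inner product of two real matrices. -/
noncomputable def frobInner {m n : Type*} [Fintype m] [Fintype n] (A B : Matrix m n ℝ) : ℝ :=
  ∑ i, ∑ j, A i j * B i j

/-- The adapted Bures–Wasserstein distance `d_ABW(L, M) = inf_{O ∈ 𝐎} ‖L - M O‖_F`. -/
noncomputable def dABW {d T : ℕ} (L M : Mat d T) : ℝ :=
  sInf {r : ℝ | ∃ O : Mat d T, memO O ∧ r = frobNorm (L - M * O)}

/-- The set `𝐎*(L, M)` of optimizers of `inf_{O ∈ 𝐎} ‖L - M O‖_F`. -/
noncomputable def OStar {d T : ℕ} (L M : Mat d T) : Set (Mat d T) :=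
  {O | memO O ∧ frobNorm (L - M * O) = dABW L M}

/-- The set `𝐕(L) = {M P - L : M ∈ 𝐋, P ∈ 𝐎*(L, M)}`. -/
noncomputable def VSet {d T : ℕ} (L : Mat d T) : Set (Mat d T) :=
  {V | ∃ M P : Mat d T, memL M ∧ P ∈ OStar L M ∧ V = M * P - L}

/-- The set `𝒱(L) = {V ∈ 𝐋 : (Vᵀ L)_{t,t} is symmetric for all t}`. -/
def calV {d T : ℕ} (L : Mat d T) : Set (Mat d T) :=
  {V | memL V ∧ ∀ t : Fin T, (blk (Vᵀ * L) t).IsSymm}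

/-- The set `𝐋^reg = {L ∈ 𝐋 : (Lᵀ L)_{t,t} is positive definite for all t}`. -/
def LReg {d T : ℕ} : Set (Mat d T) :=
  {L | memL L ∧ ∀ t : Fin T, (blk (Lᵀ * L) t).PosDef}

/-- The positive semidefinite square root, as defined in the older Mathlib (since removed). -/
noncomputable def Matrix.PosSemidef.sqrt {n : Type*} [Fintype n] [DecidableEq n]
    {A : Matrix n n ℝ} (hA : A.PosSemidef) : Matrix n n ℝ :=
  (hA.1.eigenvectorUnitary : Matrix n n ℝ) * diagonal ((↑) ∘ (√·) ∘ hA.1.eigenvalues) *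
    (star (hA.1.eigenvectorUnitary : Matrix n n ℝ))

/-- The sum of the singular values of a real square matrix `A`,
i.e. the trace of the positive semidefinite square root of `Aᵀ A`. -/
noncomputable def svSum {n : ℕ} (A : Matrix (Fin n) (Fin n) ℝ) : ℝ :=
  (Matrix.posSemidef_conjTranspose_mul_self A).sqrt.trace

/-- The operator norm of a real matrix: the supremum of the euclidean norm `‖A x‖₂`
over the euclidean unit ball. -/
noncomputable def opNorm {m n : Type*} [Fintype m] [Fintype n] (A : Matrix m n ℝ) : ℝ :=
  sSup {r : ℝ | ∃ x : n → ℝ, (∑ j, (x j) ^ 2) ≤ 1 ∧ r = Real.sqrt (∑ i, (A.mulVec x i) ^ 2)}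

namespace Stmt11Aux

section General
variable {m n : Type*} [Fintype m] [Fintype n]

noncomputable def toE (A : Matrix m n ℝ) : EuclideanSpace ℝ (m × n) :=
  (WithLp.equiv 2 _).symm fun p => A p.1 p.2

lemma toE_apply (A : Matrix m n ℝ) (p : m × n) : toE A p = A p.1 p.2 := rfl
lemma toE_add (A B : Matrix m n ℝ) : toE (A + B) = toE A + toE B := rfl
lemma toE_smul (r : ℝ) (A : Matrix m n ℝ) : toE (r • A) = r • toE A := rfl
lemma toE_zero : toE (0 : Matrix m n ℝ) = 0 := rfl
lemma toE_inj {A B : Matrix m n ℝ} (h : toE A = toE B) : A = B :=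
  Matrix.ext fun i j => congrArg (fun x : EuclideanSpace ℝ (m × n) => x (i, j)) h

lemma frobNorm_eq_norm (A : Matrix m n ℝ) : frobNorm A = ‖toE A‖ := by
  rw [frobNorm, EuclideanSpace.norm_eq]
  congr 1
  rw [Fintype.sum_prod_type]
  refine Finset.sum_congr rfl fun i _ => Finset.sum_congr rfl fun j _ => ?_
  rw [toE_apply, Real.norm_eq_abs, sq_abs]

lemma frobNorm_nonneg (A : Matrix m n ℝ) : 0 ≤ frobNorm A := Real.sqrt_nonneg _
lemma frobNorm_zero : frobNorm (0 : Matrix m n ℝ) = 0 := by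
  rw [frobNorm_eq_norm, toE_zero, norm_zero]
lemma frobNorm_eq_zero {A : Matrix m n ℝ} (h : frobNorm A = 0) : A = 0 := by
  rw [frobNorm_eq_norm, norm_eq_zero] at h
  exact toE_inj (h.trans toE_zero.symm)
lemma frobNorm_neg (A : Matrix m n ℝ) : frobNorm (-A) = frobNorm A := by
  rw [frobNorm_eq_norm, frobNorm_eq_norm, show toE (-A) = -(toE A) from rfl, norm_neg]
lemma frobNorm_sub_comm (A B : Matrix m n ℝ) : frobNorm (A - B) = frobNorm (B - A) := by
  rw [← frobNorm_neg, neg_sub]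
lemma frobNorm_smul (r : ℝ) (A : Matrix m n ℝ) : frobNorm (r • A) = |r| * frobNorm A := by
  rw [frobNorm_eq_norm, frobNorm_eq_norm, toE_smul, norm_smul, Real.norm_eq_abs]
lemma frobNorm_add_le (A B : Matrix m n ℝ) : frobNorm (A + B) ≤ frobNorm A + frobNorm B := by
  rw [frobNorm_eq_norm, frobNorm_eq_norm, frobNorm_eq_norm, toE_add]
  exact norm_add_le _ _
lemma frobNorm_triangle (A B C : Matrix m n ℝ) :
    frobNorm (A - C) ≤ frobNorm (A - B) + frobNorm (B - C) := by
  rw [← sub_add_sub_cancel A B C]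
  exact frobNorm_add_le _ _

lemma frob_sameRay {A B : Matrix m n ℝ} (h : frobNorm (A + B) = frobNorm A + frobNorm B)
    (hA : A ≠ 0) : ∃ r : ℝ, 0 ≤ r ∧ B = r • A := by
  have hsr : SameRay ℝ (toE A) (toE B) := by
    rw [sameRay_iff_norm_add, ← toE_add, ← frobNorm_eq_norm, ← frobNorm_eq_norm,
      ← frobNorm_eq_norm]
    exact h
  have hA' : toE A ≠ 0 := fun hz => hA (toE_inj (hz.trans toE_zero.symm))
  obtain ⟨r, hr, hrA⟩ := hsr.exists_nonneg_left hA'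
  exact ⟨r, hr, toE_inj (by rw [toE_smul, hrA])⟩

lemma cont_entry (p : m) (q : n) : Continuous fun A : Matrix m n ℝ => A p q :=
  (continuous_apply q).comp (continuous_apply p)

lemma continuous_frobNorm : Continuous fun A : Matrix m n ℝ => frobNorm A := by
  simp only [frobNorm]
  exact Real.continuous_sqrt.comp <| continuous_finset_sum _ fun i _ =>
    continuous_finset_sum _ fun j _ => (cont_entry i j).pow 2

/-- Rigidity for equality in the triangle inequality. -/
lemma rigid {A B C : Matrix m n ℝ} {a b : ℝ} (ha : 0 < a)
    (hAB : frobNorm (B - A) = a) (hBC : frobNorm (C - B) = b)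
    (hAC : frobNorm (C - A) = a + b) :
    C - A = ((a + b) / a) • (B - A) := by
  have hxy : (B - A) + (C - B) = C - A := by abel
  have hsum : frobNorm ((B - A) + (C - B)) = frobNorm (B - A) + frobNorm (C - B) := by
    rw [hxy, hAB, hBC, hAC]
  have hne : B - A ≠ 0 := by
    intro h
    rw [h, frobNorm_zero] at hAB
    linarith
  obtain ⟨r, hr, hry⟩ := frob_sameRay hsum hne
  have h1 : frobNorm ((B - A) + (C - B)) = (1 + r) * a := by
    have h0 : (B - A) + (C - B) = (1 + r) • (B - A) := by rw [hry, add_smul, one_smul]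
    rw [h0, frobNorm_smul, abs_of_nonneg (by linarith), hAB]
  have h2 : (1 + r) * a = a + b := by rw [← h1, hxy, hAC]
  have h3 : 1 + r = (a + b) / a := by
    rw [eq_div_iff (ne_of_gt ha)]
    linarith
  calc C - A = (B - A) + (C - B) := hxy.symm
    _ = (1 + r) • (B - A) := by rw [hry, add_smul, one_smul]
    _ = ((a + b) / a) • (B - A) := by rw [h3]

lemma sum_sq_eq_trace {ι : Type*} [Fintype ι] (A : Matrix ι ι ℝ) :
    ∑ i, ∑ j, A i j ^ 2 = (A * Aᵀ).trace := by
  simp [Matrix.trace, Matrix.mul_apply, Matrix.diag, sq]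

lemma frobNorm_mul_orth {ι : Type*} [Fintype ι] [DecidableEq ι] (A O : Matrix ι ι ℝ)
    (hO : O * Oᵀ = 1) : frobNorm (A * O) = frobNorm A := by
  rw [frobNorm, frobNorm, sum_sq_eq_trace, sum_sq_eq_trace]
  congr 2
  rw [transpose_mul, mul_assoc, ← mul_assoc O, hO, one_mul]

end General

section MatDT
variable {d T : ℕ}

lemma memO_one : memO (1 : Mat d T) := by
  constructor
  · intro t s i j hts
    exact Matrix.one_apply_ne (by simp [Prod.ext_iff, hts])
  · rw [transpose_one, one_mul]

lemma memO_orth {O : Mat d T} (hO : memO O) : Oᵀ * O = 1 := hO.2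

lemma memO_orth' {O : Mat d T} (hO : memO O) : O * Oᵀ = 1 :=
  mul_eq_one_comm.mp hO.2

lemma memO_transpose {O : Mat d T} (hO : memO O) : memO Oᵀ := by
  refine ⟨fun t s i j hts => hO.1 s t j i hts.symm, ?_⟩
  rw [transpose_transpose]
  exact memO_orth' hO

lemma memO_mul {O₁ O₂ : Mat d T} (h₁ : memO O₁) (h₂ : memO O₂) : memO (O₁ * O₂) := by
  constructor
  · intro t s i j hts
    rw [Matrix.mul_apply]
    apply Finset.sum_eq_zero
    rintro ⟨r, k⟩ -
    by_cases hrt : r = t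
    · subst hrt
      rw [h₂.1 r s k j hts, mul_zero]
    · rw [h₁.1 t r i k (fun h => hrt h.symm), zero_mul]
  · rw [transpose_mul, mul_assoc, ← mul_assoc O₁ᵀ, h₁.2, one_mul, h₂.2]

lemma dSet_nonempty (L M : Mat d T) :
    {r : ℝ | ∃ O : Mat d T, memO O ∧ r = frobNorm (L - M * O)}.Nonempty :=
  ⟨_, 1, memO_one, rfl⟩

lemma dSet_bddBelow (L M : Mat d T) :
    BddBelow {r : ℝ | ∃ O : Mat d T, memO O ∧ r = frobNorm (L - M * O)} :=
  ⟨0, by rintro r ⟨O, hO, rfl⟩; exact Real.sqrt_nonneg _⟩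

lemma dABW_nonneg (L M : Mat d T) : 0 ≤ dABW L M :=
  le_csInf (dSet_nonempty L M) (by rintro r ⟨O, hO, rfl⟩; exact Real.sqrt_nonneg _)

lemma dABW_le {L M O : Mat d T} (hO : memO O) : dABW L M ≤ frobNorm (L - M * O) :=
  csInf_le (dSet_bddBelow L M) ⟨O, hO, rfl⟩

lemma isCompact_memO : IsCompact {O : Mat d T | memO O} := by
  have hsub : {O : Mat d T | memO O} ⊆
      Set.pi Set.univ fun _ : Fin T × Fin d =>
        Set.pi Set.univ fun _ : Fin T × Fin d => Set.Icc (-1 : ℝ) 1 := by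
    intro O hO p _ q _
    have h1 : (Oᵀ * O) q q = 1 := by rw [hO.2, Matrix.one_apply_eq]
    have h2 : ∑ k, O k q ^ 2 = 1 := by
      rw [← h1, Matrix.mul_apply]
      exact Finset.sum_congr rfl fun k _ => by rw [Matrix.transpose_apply, sq]
    have h3 : O p q ^ 2 ≤ 1 := by
      rw [← h2]
      exact Finset.single_le_sum (fun k _ => sq_nonneg (O k q)) (Finset.mem_univ p)
    constructor <;> nlinarith [sq_nonneg (O p q)]
  have hcomp : IsCompact (Set.pi Set.univ fun _ : Fin T × Fin d =>
      Set.pi Set.univ fun _ : Fin T × Fin d => Set.Icc (-1 : ℝ) 1) :=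
    isCompact_univ_pi fun _ => isCompact_univ_pi fun _ => isCompact_Icc
  refine IsCompact.of_isClosed_subset hcomp ?_ hsub
  have hc1 : IsClosed {O : Mat d T | ∀ (t s : Fin T) (i j : Fin d),
      t ≠ s → O (t, i) (s, j) = 0} := by
    have he : {O : Mat d T | ∀ (t s : Fin T) (i j : Fin d), t ≠ s → O (t, i) (s, j) = 0}
        = ⋂ (t : Fin T) (s : Fin T) (i : Fin d) (j : Fin d),
          {O : Mat d T | t ≠ s → O (t, i) (s, j) = 0} := by
      ext O; simp [Set.mem_iInter]
    rw [he]
    refine isClosed_iInter fun t => isClosed_iInter fun s => isClosed_iInter fun i =>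
      isClosed_iInter fun j => ?_
    by_cases hts : t = s
    · simp [hts]
    · have he2 : {O : Mat d T | t ≠ s → O (t, i) (s, j) = 0}
          = {O : Mat d T | O (t, i) (s, j) = 0} := by
        ext O; simp [hts]
      rw [he2]
      exact isClosed_eq (cont_entry _ _) continuous_const
  have hc2 : IsClosed {O : Mat d T | Oᵀ * O = 1} := by
    have he : {O : Mat d T | Oᵀ * O = 1} = ⋂ (p : Fin T × Fin d) (q : Fin T × Fin d),
        {O : Mat d T | ∑ k, O k p * O k q = (1 : Mat d T) p q} := by
      ext O
      simp only [Set.mem_iInter, Set.mem_setOf_eq]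
      constructor
      · intro h p q
        rw [← h, Matrix.mul_apply]
        exact Finset.sum_congr rfl fun k _ => by rw [Matrix.transpose_apply]
      · intro h
        ext p q
        rw [Matrix.mul_apply, ← h p q]
        exact Finset.sum_congr rfl fun k _ => by rw [Matrix.transpose_apply]
    rw [he]
    refine isClosed_iInter fun p => isClosed_iInter fun q =>
      isClosed_eq (continuous_finset_sum _ fun k _ => (cont_entry k p).mul (cont_entry k q))
        continuous_const
  exact hc1.inter hc2

lemma continuous_mulLeft (M : Mat d T) : Continuous fun Q : Mat d T => M * Q := by
  have he : (fun Q : Mat d T => M * Q) = fun Q => fun p q => ∑ k, M p k * Q k q := by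
    funext Q p q
    exact Matrix.mul_apply
  rw [he]
  exact continuous_pi fun p => continuous_pi fun q =>
    continuous_finset_sum _ fun k _ => continuous_const.mul (cont_entry k q)

lemma dABW_attained (L M : Mat d T) :
    ∃ O : Mat d T, memO O ∧ frobNorm (L - M * O) = dABW L M := by
  obtain ⟨O₀, hO₀, hmin⟩ := isCompact_memO.exists_isMinOn ⟨1, memO_one⟩
    ((continuous_frobNorm.comp (continuous_const.sub (continuous_mulLeft M))).continuousOn)
  refine ⟨O₀, hO₀, le_antisymm ?_ (dABW_le hO₀)⟩
  refine le_csInf (dSet_nonempty L M) ?_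
  rintro r ⟨O, hO, rfl⟩
  exact hmin hO

lemma dABW_mul_right {L M O : Mat d T} (hO : memO O) : dABW L (M * O) = dABW L M := by
  unfold dABW
  congr 1
  ext r
  constructor
  · rintro ⟨Q, hQ, rfl⟩
    exact ⟨O * Q, memO_mul hO hQ, by rw [mul_assoc]⟩
  · rintro ⟨Q, hQ, rfl⟩
    refine ⟨Oᵀ * Q, memO_mul (memO_transpose hO) hQ, ?_⟩
    rw [mul_assoc M O, ← mul_assoc O, memO_orth' hO, one_mul]

lemma dABW_mul_left {X Y O : Mat d T} (hO : memO O) : dABW (X * O) Y = dABW X Y := by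
  unfold dABW
  congr 1
  ext r
  constructor
  · rintro ⟨Q, hQ, rfl⟩
    refine ⟨Q * Oᵀ, memO_mul hQ (memO_transpose hO), ?_⟩
    have he : X * O - Y * Q = (X - Y * (Q * Oᵀ)) * O := by
      rw [sub_mul, mul_assoc Y (Q * Oᵀ) O, mul_assoc Q Oᵀ O, memO_orth hO, mul_one]
    rw [he, frobNorm_mul_orth _ O (memO_orth' hO)]
  · rintro ⟨Q, hQ, rfl⟩
    refine ⟨Q * O, memO_mul hQ hO, ?_⟩
    have he : X * O - Y * (Q * O) = (X - Y * Q) * O := by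
      rw [sub_mul, mul_assoc]
    rw [he, frobNorm_mul_orth _ O (memO_orth' hO)]

lemma dABW_self_mul {X O : Mat d T} (hO : memO O) : dABW X (X * O) = 0 := by
  refine le_antisymm ?_ (dABW_nonneg _ _)
  have h := dABW_le (L := X) (M := X * O) (memO_transpose hO)
  rwa [mul_assoc, memO_orth' hO, mul_one, sub_self, frobNorm_zero] at h

lemma dABW_self (X : Mat d T) : dABW X X = 0 := by
  have h := dABW_self_mul (X := X) memO_one
  rwa [mul_one] at h

lemma dABW_lipschitz (X Y Y' : Mat d T) : dABW X Y ≤ dABW X Y' + frobNorm (Y' - Y) := by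
  obtain ⟨O, hO, hOn⟩ := dABW_attained X Y'
  calc dABW X Y ≤ frobNorm (X - Y * O) := dABW_le hO
    _ ≤ frobNorm (X - Y' * O) + frobNorm (Y' * O - Y * O) := frobNorm_triangle _ _ _
    _ = dABW X Y' + frobNorm (Y' - Y) := by
        rw [hOn, ← sub_mul, frobNorm_mul_orth _ O (memO_orth' hO)]

end MatDT
end Stmt11Aux

open Stmt11Aux in
/-- every constant speed geodesic emanating from `[L]` is a displacement
interpolation `[L + uV]` for some `V ∈ 𝐕(L)`. -/
theorem stmt11 (d T : ℕ) (hd : 0 < d) (hT : 0 < T) (L : Mat d T) (hL : memL L)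
    (γ : ℝ → Mat d T) (hγL : ∀ u ∈ Set.Icc (0 : ℝ) 1, memL (γ u))
    (hγ0 : γ 0 = L)
    (hgeo : ∀ u ∈ Set.Icc (0 : ℝ) 1, ∀ v ∈ Set.Icc (0 : ℝ) 1,
      dABW (γ u) (γ v) = |u - v| * dABW (γ 0) (γ 1)) :
    ∃ V ∈ VSet L, ∀ u ∈ Set.Icc (0 : ℝ) 1, dABW (γ u) (L + u • V) = 0 := by
  classical
  have h01 : (0:ℝ) ∈ Set.Icc (0:ℝ) 1 := ⟨le_refl 0, zero_le_one⟩
  have h11 : (1:ℝ) ∈ Set.Icc (0:ℝ) 1 := ⟨zero_le_one, le_refl 1⟩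
  set D := dABW (γ 0) (γ 1) with hD
  have hLg1 : dABW L (γ 1) = D := by rw [← hγ0]
  have distL : ∀ u ∈ Set.Icc (0:ℝ) 1, dABW L (γ u) = u * D := by
    intro u hu
    rw [← hγ0, hgeo 0 h01 u hu, zero_sub, abs_neg, abs_of_nonneg hu.1]
  have distL' : ∀ u ∈ Set.Icc (0:ℝ) 1, dABW (γ u) L = u * D := by
    intro u hu
    rw [← hγ0, hgeo u hu 0 h01, sub_zero, abs_of_nonneg hu.1]
  rcases eq_or_lt_of_le (show (0:ℝ) ≤ D from hD ▸ dABW_nonneg _ _) with hD0 | hDpos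
  · -- degenerate case D = 0
    refine ⟨0, ⟨L, 1, hL, ⟨memO_one, ?_⟩, by rw [mul_one, sub_self]⟩, ?_⟩
    · rw [mul_one, sub_self, frobNorm_zero, dABW_self]
    · intro u hu
      rw [smul_zero, add_zero, distL' u hu, ← hD0, mul_zero]
  · -- main case D > 0
    have hDne : D ≠ 0 := ne_of_gt hDpos
    obtain ⟨P, hP, hPn⟩ := dABW_attained L (γ 1)
    rw [hLg1] at hPn
    set C := γ 1 * P with hC
    have hdLCQ : ∀ Q : Mat d T, memO Q → dABW L (C * Q) = D := by
      intro Q hQ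
      rw [hC, mul_assoc, dABW_mul_right (memO_mul hP hQ), hLg1]
    have hdCv : ∀ v ∈ Set.Icc (0:ℝ) 1, dABW (γ v) C = (1 - v) * D := by
      intro v hv
      rw [hC, dABW_mul_right hP, hgeo v hv 1 h11,
        abs_of_nonpos (by linarith [hv.2]), neg_sub]
    -- Step B: existence of good Q for each u ∈ (0,1]
    have exists_good : ∀ u ∈ Set.Ioc (0:ℝ) 1, ∃ Q : Mat d T, memO Q ∧
        frobNorm (L - C * Q) = D ∧ dABW (γ u) (L + u • (C * Q - L)) = 0 := by
      intro u hu
      have huIcc : u ∈ Set.Icc (0:ℝ) 1 := ⟨le_of_lt hu.1, hu.2⟩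
      have hune : u ≠ 0 := ne_of_gt hu.1
      obtain ⟨W, hW, hWn⟩ := dABW_attained (γ u) L
      rw [distL' u huIcc] at hWn
      have hB : frobNorm (γ u * Wᵀ - L) = u * D := by
        rw [← hWn, ← frobNorm_mul_orth (γ u - L * W) Wᵀ
          (by rw [transpose_transpose]; exact hW.2)]
        congr 1
        rw [sub_mul, mul_assoc, memO_orth' hW, mul_one]
      have hBC : dABW (γ u * Wᵀ) C = (1 - u) * D := by
        rw [dABW_mul_left (memO_transpose hW)]
        exact hdCv u huIcc
      obtain ⟨S, hS, hSn⟩ := dABW_attained (γ u * Wᵀ) C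
      rw [hBC] at hSn
      have hlow : D ≤ frobNorm (L - C * S) := by
        have h := dABW_le (L := L) (M := C * S) (O := 1) memO_one
        rw [mul_one] at h
        rw [← hdLCQ S hS]
        exact h
      have hupp : frobNorm (L - C * S) ≤ u * D + (1 - u) * D := by
        calc frobNorm (L - C * S)
            ≤ frobNorm (L - γ u * Wᵀ) + frobNorm (γ u * Wᵀ - C * S) := frobNorm_triangle _ _ _
          _ = u * D + (1 - u) * D := by rw [frobNorm_sub_comm L, hB, hSn]
      have hACn : frobNorm (C * S - L) = u * D + (1 - u) * D := by
        rw [frobNorm_sub_comm]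
        refine le_antisymm hupp ?_
        have he : u * D + (1 - u) * D = D := by ring
        rw [he]
        exact hlow
      have hrig := rigid (A := L) (B := γ u * Wᵀ) (C := C * S)
        (mul_pos hu.1 hDpos) hB (by rw [frobNorm_sub_comm]; exact hSn) hACn
      have hBt : L + u • (C * S - L) = γ u * Wᵀ := by
        rw [hrig, smul_smul]
        have he : u * ((u * D + (1 - u) * D) / (u * D)) = 1 := by
          rw [mul_comm, div_mul_eq_mul_div, div_eq_iff (mul_ne_zero hune hDne)]
          ring
        rw [he, one_smul]
        abel
      refine ⟨S, hS, ?_, ?_⟩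
      · refine le_antisymm ?_ hlow
        have he : u * D + (1 - u) * D = D := by ring
        rw [← he]
        exact hupp
      · rw [hBt]
        exact dABW_self_mul (memO_transpose hW)
    -- Step C: propagation of goodness forward
    have hgood_mono : ∀ (Q : Mat d T) (u v : ℝ), u ∈ Set.Ioc (0:ℝ) 1 → v ∈ Set.Ioc (0:ℝ) 1 →
        u ≤ v → memO Q → frobNorm (L - C * Q) = D →
        dABW (γ u) (L + u • (C * Q - L)) = 0 →
        dABW (γ v) (L + v • (C * Q - L)) = 0 := by
      intro Q u v hu hv huv hQ hQD hQu
      rcases eq_or_lt_of_le huv with rfl | huv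
      · exact hQu
      have huIcc : u ∈ Set.Icc (0:ℝ) 1 := ⟨le_of_lt hu.1, hu.2⟩
      have hvIcc : v ∈ Set.Icc (0:ℝ) 1 := ⟨le_of_lt hv.1, hv.2⟩
      have hune : u ≠ 0 := ne_of_gt hu.1
      obtain ⟨O, hO, hOn⟩ := dABW_attained (γ u) (L + u • (C * Q - L))
      rw [hQu] at hOn
      have hγu : γ u = (L + u • (C * Q - L)) * O := sub_eq_zero.mp (frobNorm_eq_zero hOn)
      have hZu : L + u • (C * Q - L) = γ u * Oᵀ := by
        rw [hγu, mul_assoc (L + u • (C * Q - L)) O Oᵀ, memO_orth' hO, mul_one]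
      have hZuv : dABW (L + u • (C * Q - L)) (γ v) = (v - u) * D := by
        rw [hZu, dABW_mul_left (memO_transpose hO), hgeo u huIcc v hvIcc,
          abs_of_nonpos (by linarith), neg_sub]
      obtain ⟨Tm, hTm, hTn⟩ := dABW_attained (L + u • (C * Q - L)) (γ v)
      rw [hZuv] at hTn
      have hxn : frobNorm ((L + u • (C * Q - L)) - L) = u * D := by
        rw [add_sub_cancel_left, frobNorm_smul, abs_of_pos hu.1, frobNorm_sub_comm, hQD]
      have hlow : v * D ≤ frobNorm (L - γ v * Tm) := by
        rw [← distL v hvIcc]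
        exact dABW_le hTm
      have hupp : frobNorm (L - γ v * Tm) ≤ u * D + (v - u) * D := by
        calc frobNorm (L - γ v * Tm)
            ≤ frobNorm (L - (L + u • (C * Q - L)))
              + frobNorm ((L + u • (C * Q - L)) - γ v * Tm) := frobNorm_triangle _ _ _
          _ = u * D + (v - u) * D := by rw [frobNorm_sub_comm L, hxn, hTn]
      have hACn : frobNorm (γ v * Tm - L) = u * D + (v - u) * D := by
        rw [frobNorm_sub_comm]
        refine le_antisymm hupp ?_
        have he : u * D + (v - u) * D = v * D := by ring
        rw [he]
        exact hlow
      have hrig := rigid (A := L) (B := L + u • (C * Q - L)) (C := γ v * Tm)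
        (mul_pos hu.1 hDpos) hxn (by rw [frobNorm_sub_comm]; exact hTn) hACn
      rw [add_sub_cancel_left, smul_smul] at hrig
      have he : (u * D + (v - u) * D) / (u * D) * u = v := by
        rw [div_mul_eq_mul_div, div_eq_iff (mul_ne_zero hune hDne)]
        ring
      rw [he] at hrig
      have hfin : L + v • (C * Q - L) = γ v * Tm := by
        rw [← hrig]
        abel
      rw [hfin]
      exact dABW_self_mul hTm
    -- Step D: compactness and limit
    have hseq : ∀ n : ℕ, ((1:ℝ)/(n+1)) ∈ Set.Ioc (0:ℝ) 1 := by
      intro n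
      constructor
      · positivity
      · rw [div_le_one (by positivity)]
        have h : (0:ℝ) ≤ (n:ℝ) := Nat.cast_nonneg n
        linarith
    haveI : FirstCountableTopology (Mat d T) :=
      inferInstanceAs (FirstCountableTopology ((Fin T × Fin d) → (Fin T × Fin d) → ℝ))
    choose Qs hQs1 hQs2 hQs3 using fun n : ℕ => exists_good _ (hseq n)
    obtain ⟨Qst, hQstMem, φ, hφ, hconv⟩ := isCompact_memO.tendsto_subseq hQs1
    have hQstO : memO Qst := hQstMem
    have hcontN : Continuous fun Q : Mat d T => frobNorm (L - C * Q) :=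
      continuous_frobNorm.comp (continuous_const.sub (continuous_mulLeft C))
    have hnormst : frobNorm (L - C * Qst) = D := by
      have h1 : Tendsto (fun k => frobNorm (L - C * Qs (φ k))) atTop
          (𝓝 (frobNorm (L - C * Qst))) := (hcontN.tendsto Qst).comp hconv
      have h2 : (fun k => frobNorm (L - C * Qs (φ k))) = fun _ => D :=
        funext fun k => hQs2 (φ k)
      rw [h2] at h1
      exact tendsto_nhds_unique h1 tendsto_const_nhds
    refine ⟨C * Qst - L, ⟨γ 1, P * Qst, hγL 1 h11, ⟨memO_mul hP hQstO, ?_⟩, ?_⟩, ?_⟩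
    · rw [← mul_assoc, ← hC, hnormst, hLg1]
    · rw [← mul_assoc, ← hC]
    · intro u hu
      rcases eq_or_lt_of_le hu.1 with h0u | h0u
      · rw [← h0u, zero_smul, add_zero, hγ0]
        exact dABW_self L
      · have huIoc : u ∈ Set.Ioc (0:ℝ) 1 := ⟨h0u, hu.2⟩
        have hev : ∀ᶠ k in atTop, dABW (γ u) (L + u • (C * Qst - L)) ≤
            frobNorm ((L + u • (C * Qs (φ k) - L)) - (L + u • (C * Qst - L))) := by
          obtain ⟨N, hN⟩ := exists_nat_gt (1 / u)
          filter_upwards [eventually_ge_atTop N] with k hk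
          have hφk : (N:ℝ) ≤ (φ k : ℝ) := by
            exact_mod_cast le_trans hk hφ.le_apply
          have hk2 : (1:ℝ)/(φ k + 1) ≤ u := by
            rw [div_le_iff₀ (by positivity)]
            rw [div_lt_iff₀ h0u] at hN
            nlinarith
          have hg := hgood_mono (Qs (φ k)) _ u (hseq (φ k)) huIoc hk2 (hQs1 (φ k))
            (hQs2 (φ k)) (hQs3 (φ k))
          calc dABW (γ u) (L + u • (C * Qst - L))
              ≤ dABW (γ u) (L + u • (C * Qs (φ k) - L))
                + frobNorm ((L + u • (C * Qs (φ k) - L)) - (L + u • (C * Qst - L))) :=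
                dABW_lipschitz _ _ _
            _ = frobNorm ((L + u • (C * Qs (φ k) - L)) - (L + u • (C * Qst - L))) := by
                rw [hg, zero_add]
        have hlim : Tendsto (fun k =>
            frobNorm ((L + u • (C * Qs (φ k) - L)) - (L + u • (C * Qst - L))))
            atTop (𝓝 0) := by
          have hcont : Continuous fun Q : Mat d T =>
              frobNorm ((L + u • (C * Q - L)) - (L + u • (C * Qst - L))) :=
            continuous_frobNorm.comp
              ((continuous_const.add
                (((continuous_mulLeft C).sub continuous_const).const_smul u)).sub
                continuous_const)
          have h2 := (hcont.tendsto Qst).comp hconv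
          simpa [sub_self, frobNorm_zero, Function.comp_def] using h2
        exact le_antisymm (ge_of_tendsto hlim hev) (dABW_nonneg _ _)
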